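/- A polyhedron P of the form (bounded polytope) + C, for a pointed rational polyhedral cone C in Q^n, is a translate of C if and only if P has no bounded edge. -/

import Mathlib

open scoped Pointwise BigOperators
open Matrix

/-- `F` is a face of the convex set `P`. -/
def IsFaceOf {n : ℕ} (P F : Set (Fin n → ℝ)) : Prop :=
  F ⊆ P ∧ Convex ℝ F ∧ ∀ x ∈ P, ∀ y ∈ P, ∀ t : ℝ, 0 < t → t < 1 →
    t • x + (1 - t) • y ∈ F → x ∈ F ∧ y ∈ F

namespace Stmt11Aux

variable {n : ℕ}

lemma cont_dotl (d : Fin n → ℝ) : Continuous (fun w : Fin n → ℝ => w ⬝ᵥ d) := by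
  unfold dotProduct
  exact continuous_finset_sum _ fun i _ => (continuous_apply i).mul continuous_const

lemma cont_dotr (w : Fin n → ℝ) : Continuous (fun d : Fin n → ℝ => w ⬝ᵥ d) := by
  unfold dotProduct
  exact continuous_finset_sum _ fun i _ => continuous_const.mul (continuous_apply i)

lemma dot_sum' (w : Fin n → ℝ) {ι : Type*} (s : Finset ι) (f : ι → (Fin n → ℝ)) :
    w ⬝ᵥ (∑ y ∈ s, f y) = ∑ y ∈ s, w ⬝ᵥ f y := by
  simp only [dotProduct, Finset.sum_apply, Finset.mul_sum]
  exact Finset.sum_comm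


lemma sum_dot' {ι : Type*} (s : Finset ι) (f : ι → (Fin n → ℝ)) (x : Fin n → ℝ) :
    (∑ y ∈ s, f y) ⬝ᵥ x = ∑ y ∈ s, f y ⬝ᵥ x := by
  simp only [dotProduct, Finset.sum_apply, Finset.sum_mul]
  exact Finset.sum_comm

lemma dot_self_pos {a : Fin n → ℝ} (ha : a ≠ 0) : 0 < a ⬝ᵥ a := by
  have h1 : ∃ i, a i ≠ 0 := by
    by_contra h
    push_neg at h
    exact ha (funext h)
  obtain ⟨i, hi⟩ := h1
  unfold dotProduct
  refine Finset.sum_pos' (fun j _ => mul_self_nonneg _) ⟨i, Finset.mem_univ i, ?_⟩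
  exact mul_self_pos.2 hi

lemma abs_dot_le (x u : Fin n → ℝ) : |x ⬝ᵥ u| ≤ ‖x‖ * ∑ i, |u i| := by
  unfold dotProduct
  calc |∑ i, x i * u i| ≤ ∑ i, |x i * u i| := Finset.abs_sum_le_sum_abs _ _
    _ ≤ ∑ i, ‖x‖ * |u i| := by
        refine Finset.sum_le_sum fun i _ => ?_
        rw [abs_mul]
        exact mul_le_mul_of_nonneg_right (norm_le_pi_norm x i) (abs_nonneg _)
    _ = ‖x‖ * ∑ i, |u i| := by rw [Finset.mul_sum]

/-- avoid finitely many hyperplanes within an open set -/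
lemma avoid (S : Finset (Fin n → ℝ)) :
    ∀ U : Set (Fin n → ℝ), IsOpen U → U.Nonempty → (∀ d ∈ S, d ≠ 0) →
    ∃ w ∈ U, ∀ d ∈ S, w ⬝ᵥ d ≠ 0 := by
  induction S using Finset.induction_on with
  | empty =>
    rintro U _ ⟨w, hw⟩ _
    exact ⟨w, hw, by simp⟩
  | @insert a s ha ih =>
    rintro U hU ⟨w0, hw0⟩ hS
    have ha0 : a ≠ 0 := hS a (Finset.mem_insert_self a s)
    have hUo : IsOpen (U ∩ {w : Fin n → ℝ | w ⬝ᵥ a ≠ 0}) := by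
      refine hU.inter ?_
      have : {w : Fin n → ℝ | w ⬝ᵥ a ≠ 0} = (fun w : Fin n → ℝ => w ⬝ᵥ a) ⁻¹' ({0}ᶜ) := rfl
      rw [this]
      exact (cont_dotl a).isOpen_preimage _ isOpen_compl_singleton
    have hUne : (U ∩ {w : Fin n → ℝ | w ⬝ᵥ a ≠ 0}).Nonempty := by
      by_cases h : w0 ⬝ᵥ a = 0
      · obtain ⟨ε, hε, hball⟩ := Metric.isOpen_iff.1 hU w0 hw0
        set δ := ε / (2 * (‖a‖ + 1)) with hδdef
        have hδpos : 0 < δ := by positivity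
        refine ⟨w0 + δ • a, hball ?_, ?_⟩
        · rw [Metric.mem_ball, dist_eq_norm, add_sub_cancel_left, norm_smul,
            Real.norm_eq_abs, abs_of_pos hδpos]
          calc δ * ‖a‖ < δ * (2 * (‖a‖ + 1)) := by
                refine mul_lt_mul_of_pos_left ?_ hδpos
                nlinarith [norm_nonneg a]
            _ = ε := by
                rw [hδdef]
                field_simp
        · simp only [Set.mem_setOf_eq, add_dotProduct, h, zero_add, smul_dotProduct,
            smul_eq_mul]
          exact ne_of_gt (mul_pos hδpos (dot_self_pos ha0))
      · exact ⟨w0, hw0, h⟩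
    obtain ⟨w, ⟨hwU, hwa⟩, hws⟩ := ih _ hUo hUne (fun d hd => hS d (Finset.mem_insert_of_mem hd))
    refine ⟨w, hwU, fun d hd => ?_⟩
    rcases Finset.mem_insert.1 hd with rfl | hd
    · exact hwa
    · exact hws d hd

/-- strict positivity on a closed cone is stable in a ball -/
lemma ball_pos (Cs : Set (Fin n → ℝ)) (hCcl : IsClosed Cs)
    (hhom : ∀ a : ℝ, 0 ≤ a → ∀ c ∈ Cs, a • c ∈ Cs)
    (w : Fin n → ℝ) (hw : ∀ c ∈ Cs, c ≠ 0 → 0 < w ⬝ᵥ c) :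
    ∃ ε > 0, ∀ w' : Fin n → ℝ, dist w' w < ε → ∀ c ∈ Cs, c ≠ 0 → 0 < w' ⬝ᵥ c := by
  classical
  set C1 : Set (Fin n → ℝ) := {c | c ∈ Cs ∧ ∑ i, |c i| = 1} with hC1def
  have hnorm : ∀ c ∈ Cs, c ≠ 0 → 0 < ∑ i, |c i| ∧ ((∑ i, |c i|)⁻¹ • c) ∈ C1 := by
    intro c hc hc0
    have hne : ∃ i, c i ≠ 0 := by
      by_contra h; push_neg at h; exact hc0 (funext h)
    obtain ⟨i, hi⟩ := hne
    have hσ : 0 < ∑ i, |c i| :=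
      Finset.sum_pos' (fun j _ => abs_nonneg _) ⟨i, Finset.mem_univ i, abs_pos.2 hi⟩
    refine ⟨hσ, ⟨hhom _ (le_of_lt (inv_pos.2 hσ)) c hc, ?_⟩⟩
    have : ∀ j, |((∑ i, |c i|)⁻¹ • c) j| = (∑ i, |c i|)⁻¹ * |c j| := by
      intro j
      simp [abs_mul, abs_of_pos (inv_pos.2 hσ)]
    rw [Finset.sum_congr rfl (fun j _ => this j), ← Finset.mul_sum]
    field_simp
  by_cases hne : C1.Nonempty
  · have hcomp : IsCompact C1 := by
      rw [Metric.isCompact_iff_isClosed_bounded]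
      constructor
      · exact hCcl.inter (isClosed_eq (continuous_finset_sum _ fun i _ =>
          (continuous_apply i).abs) continuous_const)
      · rw [isBounded_iff_forall_norm_le]
        refine ⟨1, fun c hc => ?_⟩
        rw [pi_norm_le_iff_of_nonneg zero_le_one]
        intro i
        rw [Real.norm_eq_abs]
        calc |c i| ≤ ∑ j, |c j| := Finset.single_le_sum (f := fun j => |c j|) (fun j _ => abs_nonneg _)
              (Finset.mem_univ i)
          _ = 1 := hc.2
    obtain ⟨c0, hc0, hmin⟩ := hcomp.exists_isMinOn hne (cont_dotr w).continuousOn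
    have hc0ne : c0 ≠ 0 := by
      intro h
      rw [h] at hc0
      have h2 := hc0.2
      simp at h2
    set δ := w ⬝ᵥ c0 with hδdef
    have hδpos : 0 < δ := hw c0 hc0.1 hc0ne
    refine ⟨δ / 2, by positivity, fun w' hw' c hc hcne => ?_⟩
    obtain ⟨hσ, hu⟩ := hnorm c hc hcne
    set u := (∑ i, |c i|)⁻¹ • c with hudef
    have h1 : δ ≤ w ⬝ᵥ u := hmin hu
    have h2 : |(w' - w) ⬝ᵥ u| ≤ ‖w' - w‖ * 1 := by
      have := abs_dot_le (w' - w) u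
      rwa [hu.2] at this
    have h3 : ‖w' - w‖ < δ / 2 := by rwa [← dist_eq_norm]
    have h4 : 0 < w' ⬝ᵥ u := by
      have : w' ⬝ᵥ u = w ⬝ᵥ u + (w' - w) ⬝ᵥ u := by
        rw [sub_dotProduct]; ring
      rw [this]
      have := abs_le.1 h2
      nlinarith
    have h5 : w' ⬝ᵥ c = (∑ i, |c i|) * (w' ⬝ᵥ u) := by
      rw [hudef, dotProduct_smul, smul_eq_mul]
      field_simp
    rw [h5]
    exact mul_pos hσ h4
  · refine ⟨1, one_pos, fun w' _ c hc hcne => ?_⟩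
    exact absurd ⟨_, (hnorm c hc hcne).2⟩ hne

/-- minimum principle over a convex hull of a finite set -/
lemma conv_min (Vf : Finset (Fin n → ℝ)) (w : Fin n → ℝ) (m : ℝ)
    (hm : ∀ y ∈ Vf, m ≤ w ⬝ᵥ y) {b : Fin n → ℝ}
    (hb : b ∈ convexHull ℝ (Vf : Set (Fin n → ℝ))) :
    m ≤ w ⬝ᵥ b ∧ (w ⬝ᵥ b = m →
      b ∈ convexHull ℝ {y : Fin n → ℝ | y ∈ Vf ∧ w ⬝ᵥ y = m}) := by
  classical
  rw [Finset.convexHull_eq] at hb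
  obtain ⟨lam, h0, h1, hcm⟩ := hb
  rw [Finset.centerMass_eq_of_sum_1 _ _ h1] at hcm
  have hdot : w ⬝ᵥ b = ∑ y ∈ Vf, lam y * (w ⬝ᵥ y) := by
    rw [← hcm, dot_sum']
    exact Finset.sum_congr rfl fun y _ => by
      rw [id_eq, dotProduct_smul, smul_eq_mul]
  have hge : m ≤ w ⬝ᵥ b := by
    rw [hdot]
    calc m = ∑ y ∈ Vf, lam y * m := by rw [← Finset.sum_mul, h1, one_mul]
      _ ≤ ∑ y ∈ Vf, lam y * (w ⬝ᵥ y) :=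
        Finset.sum_le_sum fun y hy => mul_le_mul_of_nonneg_left (hm y hy) (h0 y hy)
  refine ⟨hge, fun heq => ?_⟩
  have hz : ∀ y ∈ Vf, lam y * (w ⬝ᵥ y - m) = 0 := by
    rw [← Finset.sum_eq_zero_iff_of_nonneg
      (fun y hy => mul_nonneg (h0 y hy) (sub_nonneg.2 (hm y hy)))]
    have e1 : ∑ y ∈ Vf, lam y * (w ⬝ᵥ y - m) = (∑ y ∈ Vf, lam y * (w ⬝ᵥ y)) - m := by
      calc ∑ y ∈ Vf, lam y * (w ⬝ᵥ y - m)
          = ∑ y ∈ Vf, (lam y * (w ⬝ᵥ y) - lam y * m) :=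
            Finset.sum_congr rfl fun y _ => by ring
        _ = (∑ y ∈ Vf, lam y * (w ⬝ᵥ y)) - ∑ y ∈ Vf, lam y * m := Finset.sum_sub_distrib _ _
        _ = (∑ y ∈ Vf, lam y * (w ⬝ᵥ y)) - m := by rw [← Finset.sum_mul, h1, one_mul]
    rw [e1, ← hdot, heq, sub_self]
  have hz' : ∀ y ∈ Vf, w ⬝ᵥ y ≠ m → lam y = 0 := by
    intro y hy hne
    rcases mul_eq_zero.1 (hz y hy) with h | h
    · exact h
    · exact absurd (sub_eq_zero.1 h) hne
  set Af := Vf.filter (fun y => w ⬝ᵥ y = m) with hAf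
  have hsum : ∑ y ∈ Af, lam y = 1 := by
    rw [hAf, Finset.sum_filter_of_ne, h1]
    intro y hy hne
    by_contra hc
    exact hne (hz' y hy hc)
  have hb2 : b = Af.centerMass lam id := by
    rw [Finset.centerMass_eq_of_sum_1 _ _ hsum, ← hcm, hAf]
    refine (Finset.sum_filter_of_ne ?_).symm
    intro y hy hne
    by_contra hc
    exact hne (by rw [hz' y hy hc, zero_smul])
  rw [hb2]
  refine Finset.centerMass_mem_convexHull Af
    (fun y hy => h0 y (Finset.mem_filter.1 hy).1) (by rw [hsum]; exact one_pos) ?_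
  intro y hy
  obtain ⟨h1', h2'⟩ := Finset.mem_filter.1 hy
  exact ⟨h1', h2'⟩



lemma forward (C P : Set (Fin n → ℝ)) (hC0 : (0 : Fin n → ℝ) ∈ C)
    (hChom : ∀ a : ℝ, 0 ≤ a → ∀ c ∈ C, a • c ∈ C) (v : Fin n → ℝ)
    (hPv : P = {v} + C) :
    ¬∃ F : Set (Fin n → ℝ), F.Nonempty ∧ IsFaceOf P F ∧
      Module.finrank ℝ (vectorSpan ℝ F) = 1 ∧ Bornology.IsBounded F := by
  rintro ⟨F, ⟨x₀, hx₀⟩, ⟨hFP, hFconv, hFext⟩, hrank, hFbdd⟩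
  have hPmem : ∀ x, x ∈ P ↔ ∃ c ∈ C, x = v + c := by
    intro x
    rw [hPv, Set.singleton_add]
    constructor
    · rintro ⟨c, hc, rfl⟩; exact ⟨c, hc, rfl⟩
    · rintro ⟨c, hc, rfl⟩; exact ⟨c, hc, rfl⟩
  have hvP : v ∈ P := (hPmem v).2 ⟨0, hC0, by simp⟩
  -- v ∈ F
  obtain ⟨c₀, hc₀, rfl⟩ := (hPmem x₀).1 (hFP hx₀)
  have hvF : v ∈ F := by
    have h2c : v + (2:ℝ) • c₀ ∈ P := (hPmem _).2 ⟨(2:ℝ) • c₀, hChom 2 (by norm_num) _ hc₀, rfl⟩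
    have hcomb : (1/2 : ℝ) • v + (1 - 1/2 : ℝ) • (v + (2:ℝ) • c₀) = v + c₀ := by
      norm_num
      module
    exact (hFext v hvP _ h2c (1/2) (by norm_num) (by norm_num) (by rw [hcomb]; exact hx₀)).1
  -- some nonzero direction in F
  have hg : ∃ g : Fin n → ℝ, g ≠ 0 ∧ v + g ∈ F := by
    by_contra hcon
    push_neg at hcon
    have hFv : F = {v} := by
      apply Set.Subset.antisymm
      · intro x hx
        obtain ⟨c, hc, rfl⟩ := (hPmem x).1 (hFP hx)
        rcases eq_or_ne c 0 with rfl | hcne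
        · simp
        · exact absurd hx (by simpa using hcon c hcne)
      · simpa using hvF
    rw [hFv, vectorSpan_singleton] at hrank
    simp at hrank
  obtain ⟨g, hg0, hgF⟩ := hg
  have hgC : g ∈ C := by
    obtain ⟨c, hc, hcq⟩ := (hPmem _).1 (hFP hgF)
    have hgc : g = c := by
      apply add_left_cancel (a := v)
      exact hcq
    rwa [hgc]
  -- unboundedness
  obtain ⟨R, hR⟩ := isBounded_iff_forall_norm_le.1 hFbdd
  have hgn : 0 < ‖g‖ := norm_pos_iff.2 hg0
  set lam : ℝ := max 2 ((R + ‖v‖ + 1) / ‖g‖) with hlam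
  have hlam2 : (2:ℝ) ≤ lam := le_max_left _ _
  have hlamg : R + ‖v‖ + 1 ≤ lam * ‖g‖ := by
    rw [← div_le_iff₀ hgn]
    exact le_max_right _ _
  have hlamF : v + lam • g ∈ F := by
    have hxP : v + lam • g ∈ P :=
      (hPmem _).2 ⟨lam • g, hChom lam (by linarith) _ hgC, rfl⟩
    have hcomb : (1/lam : ℝ) • (v + lam • g) + (1 - 1/lam : ℝ) • v = v + g := by
      have h1 : (1/lam : ℝ) * lam = 1 := by
        field_simp
      have : (1/lam : ℝ) • (v + lam • g) + (1 - 1/lam : ℝ) • v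
          = v + ((1/lam : ℝ) * lam) • g := by module
      rw [this, h1, one_smul]
    exact (hFext _ hxP v hvP (1/lam) (by positivity) (by
      rw [div_lt_one (by linarith)]; linarith) (by rw [hcomb]; exact hgF)).1
  have h1 := hR _ hlamF
  have h2 : ‖lam • g‖ ≤ ‖v + lam • g‖ + ‖v‖ := by
    have := norm_sub_le (v + lam • g) v
    simpa using this
  rw [norm_smul, Real.norm_eq_abs, abs_of_pos (by linarith : (0:ℝ) < lam)] at h2
  nlinarith

end Stmt11Aux

theorem stmt11 (n : ℕ) (C P B : Set (Fin n → ℝ))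
    -- `C` is a pointed rational polyhedral cone:
    (hCpoly : ∃ V : Finset (Fin n → ℤ),
      C = {x | ∀ v ∈ V, 0 ≤ ∑ i, (v i : ℝ) * x i})
    (hCpointed : ∀ x ∈ C, -x ∈ C → x = 0)
    -- `P = B + C` for a bounded convex polytope `B`:
    (hB : ∃ V : Set (Fin n → ℝ), V.Finite ∧ V.Nonempty ∧ B = convexHull ℝ V)
    (hP : P = B + C) :
    (∃ v : Fin n → ℝ, P = {v} + C) ↔
      ¬∃ F : Set (Fin n → ℝ), F.Nonempty ∧ IsFaceOf P F ∧
        Module.finrank ℝ (vectorSpan ℝ F) = 1 ∧ Bornology.IsBounded F := by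
  classical
  obtain ⟨Vc, hC⟩ := hCpoly
  obtain ⟨V, hVfin, hVne, hBeq⟩ := hB
  set vR : (Fin n → ℤ) → (Fin n → ℝ) := fun v i => (v i : ℝ) with hvR
  have memC : ∀ x : Fin n → ℝ, x ∈ C ↔ ∀ v ∈ Vc, 0 ≤ vR v ⬝ᵥ x := by
    intro x
    rw [hC]
    rfl
  have hC0 : (0 : Fin n → ℝ) ∈ C := (memC 0).2 fun v _ => by simp
  have hChom : ∀ a : ℝ, 0 ≤ a → ∀ c ∈ C, a • c ∈ C := by
    intro a ha c hc
    rw [memC] at hc ⊢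
    intro v hv
    rw [dotProduct_smul, smul_eq_mul]
    exact mul_nonneg ha (hc v hv)
  constructor
  · rintro ⟨v, hv⟩
    exact Stmt11Aux.forward C P hC0 hChom v hv
  intro hno
  have hCconv : Convex ℝ C := by
    intro x hx y hy a b ha hb hab
    rw [memC] at hx hy ⊢
    intro v hv
    rw [dotProduct_add, dotProduct_smul, dotProduct_smul,
      smul_eq_mul, smul_eq_mul]
    exact add_nonneg (mul_nonneg ha (hx v hv)) (mul_nonneg hb (hy v hv))
  have hCclosed : IsClosed C := by
    have hCi : C = ⋂ v ∈ Vc, {x : Fin n → ℝ | 0 ≤ vR v ⬝ᵥ x} := by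
      ext x
      simp only [Set.mem_iInter, Set.mem_setOf_eq, memC x]
    rw [hCi]
    exact isClosed_biInter fun v _ => isClosed_le continuous_const (Stmt11Aux.cont_dotr (vR v))
  have hPconv : Convex ℝ P := by
    rw [hP, hBeq]
    exact (convex_convexHull ℝ V).add hCconv
  set Vf : Finset (Fin n → ℝ) := hVfin.toFinset with hVfdef
  have hVfc : (Vf : Set (Fin n → ℝ)) = V := hVfin.coe_toFinset
  have hVfNe : Vf.Nonempty := by
    rw [← Finset.coe_nonempty, hVfc]
    exact hVne
  have hVfB : ∀ y ∈ Vf, y ∈ B := by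
    intro y hy
    rw [hBeq]
    refine subset_convexHull ℝ V ?_
    rw [← hVfc]
    exact_mod_cast hy
  have hBP : B ⊆ P := by
    intro b hb
    rw [hP]
    have := Set.add_mem_add hb hC0
    simpa using this
  have hPelem : ∀ x ∈ P, ∃ b ∈ B, ∃ c ∈ C, b + c = x := by
    intro x hx
    rw [hP] at hx
    exact Set.mem_add.1 hx
  have hDnn : ∀ w : Fin n → ℝ, (∀ c ∈ C, c ≠ 0 → 0 < w ⬝ᵥ c) → ∀ c ∈ C, 0 ≤ w ⬝ᵥ c := by
    intro w hw c hc
    rcases eq_or_ne c 0 with rfl | h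
    · simp
    · exact le_of_lt (hw c hc h)
  have hminP : ∀ w : Fin n → ℝ, (∀ c ∈ C, c ≠ 0 → 0 < w ⬝ᵥ c) → ∀ m : ℝ,
      (∀ y ∈ Vf, m ≤ w ⬝ᵥ y) → ∀ x ∈ P,
      m ≤ w ⬝ᵥ x ∧ (w ⬝ᵥ x = m →
        x ∈ convexHull ℝ {y : Fin n → ℝ | y ∈ Vf ∧ w ⬝ᵥ y = m}) := by
    intro w hw m hm x hx
    obtain ⟨b, hb, c, hc, rfl⟩ := hPelem x hx
    have hbV : b ∈ convexHull ℝ (Vf : Set (Fin n → ℝ)) := by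
      rw [hVfc, ← hBeq]
      exact hb
    obtain ⟨h1, h2⟩ := Stmt11Aux.conv_min Vf w m hm hbV
    have hcnn : 0 ≤ w ⬝ᵥ c := hDnn w hw c hc
    have hsplit : w ⬝ᵥ (b + c) = w ⬝ᵥ b + w ⬝ᵥ c := dotProduct_add w b c
    constructor
    · rw [hsplit]
      linarith
    · intro heq
      rw [hsplit] at heq
      have hc0 : w ⬝ᵥ c = 0 := by linarith
      have hcz : c = 0 := by
        by_contra hcn
        exact absurd hc0 (ne_of_gt (hw c hc hcn))
      rw [hcz, add_zero]
      exact h2 (by linarith)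
  -- a strictly positive functional
  set w0 : Fin n → ℝ := ∑ v ∈ Vc, vR v with hw0def
  have hw0 : ∀ c ∈ C, c ≠ 0 → 0 < w0 ⬝ᵥ c := by
    intro c hc hc0
    have hexp : w0 ⬝ᵥ c = ∑ v ∈ Vc, vR v ⬝ᵥ c := Stmt11Aux.sum_dot' _ _ _
    have hnn : ∀ v ∈ Vc, 0 ≤ vR v ⬝ᵥ c := (memC c).1 hc
    rcases lt_or_eq_of_le (Finset.sum_nonneg hnn) with h | h
    · rw [hexp]
      exact h
    · exfalso
      have hall : ∀ v ∈ Vc, vR v ⬝ᵥ c = 0 :=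
        (Finset.sum_eq_zero_iff_of_nonneg hnn).1 h.symm
      have hneg : -c ∈ C := (memC _).2 fun v hv => by
        rw [dotProduct_neg, hall v hv, neg_zero]
      exact hc0 (hCpointed c hc hneg)
  -- generic w1
  set S1 : Finset (Fin n → ℝ) :=
    ((Vf ×ˢ Vf).image (fun p => p.1 - p.2)).filter (fun d => d ≠ 0) with hS1def
  have hS1ne : ∀ d ∈ S1, d ≠ 0 := fun d hd => (Finset.mem_filter.1 hd).2
  have hS1mem : ∀ y ∈ Vf, ∀ y' ∈ Vf, y ≠ y' → y - y' ∈ S1 := by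
    intro y hy y' hy' hne
    exact Finset.mem_filter.2 ⟨Finset.mem_image.2 ⟨(y, y'),
      Finset.mem_product.2 ⟨hy, hy'⟩, rfl⟩, sub_ne_zero.2 hne⟩
  obtain ⟨ε0, hε0, hball0⟩ := Stmt11Aux.ball_pos C hCclosed hChom w0 hw0
  obtain ⟨w1, hw1U, hw1gen⟩ := Stmt11Aux.avoid S1 (Metric.ball w0 ε0) Metric.isOpen_ball
    ⟨w0, Metric.mem_ball_self hε0⟩ hS1ne
  have hw1D : ∀ c ∈ C, c ≠ 0 → 0 < w1 ⬝ᵥ c :=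
    fun c hc h0 => hball0 w1 (Metric.mem_ball.1 hw1U) c hc h0
  obtain ⟨v1, hv1V, hv1min⟩ := Vf.exists_min_image (fun y => w1 ⬝ᵥ y) hVfNe
  have hv1P : v1 ∈ P := hBP (hVfB v1 hv1V)
  refine ⟨v1, Set.Subset.antisymm ?_ ?_⟩
  swap
  · intro x hx
    obtain ⟨y, hy, c, hc, rfl⟩ := Set.mem_add.1 hx
    rw [Set.mem_singleton_iff] at hy
    rw [hP, hy]
    exact Set.add_mem_add (hVfB v1 hv1V) hc
  intro p hp
  by_contra hpc
  have hpC : p - v1 ∉ C := by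
    intro h
    apply hpc
    have hpe : p = v1 + (p - v1) := by abel
    rw [hpe]
    exact Set.add_mem_add rfl h
  obtain ⟨u, hu, hud⟩ : ∃ u ∈ Vc, vR u ⬝ᵥ (p - v1) < 0 := by
    by_contra hcon
    push_neg at hcon
    exact hpC ((memC _).2 hcon)
  set dp := p - v1 with hdp
  have hw1p : 0 ≤ w1 ⬝ᵥ dp := by
    have h1 := (hminP w1 hw1D (w1 ⬝ᵥ v1) (fun y hy => hv1min y hy) p hp).1
    rw [hdp, dotProduct_sub]
    linarith
  set su := (w1 ⬝ᵥ dp) / (-(vR u ⬝ᵥ dp)) + 1 with hsu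
  have hsu1 : 1 ≤ su := by
    have h := div_nonneg hw1p (by linarith : (0:ℝ) ≤ -(vR u ⬝ᵥ dp))
    rw [hsu]
    linarith
  set w' := w1 + su • vR u with hw'
  have hw'p : w' ⬝ᵥ dp < 0 := by
    rw [hw', add_dotProduct, smul_dotProduct, smul_eq_mul, hsu]
    have key : (w1 ⬝ᵥ dp) / (-(vR u ⬝ᵥ dp)) * (vR u ⬝ᵥ dp) = -(w1 ⬝ᵥ dp) := by
      have hb : -(vR u ⬝ᵥ dp) ≠ 0 := ne_of_gt (by linarith)
      have hb' : vR u ⬝ᵥ dp ≠ 0 := ne_of_lt hud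
      field_simp
    have expand : ((w1 ⬝ᵥ dp) / (-(vR u ⬝ᵥ dp)) + 1) * (vR u ⬝ᵥ dp)
        = (w1 ⬝ᵥ dp) / (-(vR u ⬝ᵥ dp)) * (vR u ⬝ᵥ dp) + (vR u ⬝ᵥ dp) := by ring
    rw [expand, key]
    linarith
  have hw'D : ∀ c ∈ C, c ≠ 0 → 0 < w' ⬝ᵥ c := by
    intro c hc h0
    rw [hw', add_dotProduct, smul_dotProduct, smul_eq_mul]
    have h1 := hw1D c hc h0
    have h2 := (memC c).1 hc u hu
    nlinarith
  -- generic w2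
  set T3 : Finset ((Fin n → ℝ) × (Fin n → ℝ) × (Fin n → ℝ)) :=
    (Vf ×ˢ Vf ×ˢ Vf).filter
      (fun q => (∀ r : ℝ, q.2.2 - q.1 ≠ r • (q.2.1 - q.1)) ∧ q.2.1 ≠ q.1) with hT3
  set S2 : Finset (Fin n → ℝ) := T3.image
    (fun q => (w1 ⬝ᵥ (q.2.2 - q.1)) • (q.2.1 - q.1)
      - (w1 ⬝ᵥ (q.2.1 - q.1)) • (q.2.2 - q.1)) with hS2
  have hS2ne : ∀ e ∈ S1 ∪ S2, e ≠ 0 := by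
    intro e he
    rcases Finset.mem_union.1 he with he | he
    · exact hS1ne e he
    obtain ⟨q, hq, rfl⟩ := Finset.mem_image.1 he
    obtain ⟨hqmem, hq1, hq2⟩ := Finset.mem_filter.1 hq
    obtain ⟨ha, hbc⟩ := Finset.mem_product.1 hqmem
    obtain ⟨hb, hc'⟩ := Finset.mem_product.1 hbc
    intro hzero
    have heq : (w1 ⬝ᵥ (q.2.2 - q.1)) • (q.2.1 - q.1)
        = (w1 ⬝ᵥ (q.2.1 - q.1)) • (q.2.2 - q.1) := sub_eq_zero.1 hzero
    have hw1d1 : w1 ⬝ᵥ (q.2.1 - q.1) ≠ 0 := hw1gen _ (hS1mem _ hb _ ha hq2)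
    apply hq1 ((w1 ⬝ᵥ (q.2.1 - q.1))⁻¹ * (w1 ⬝ᵥ (q.2.2 - q.1)))
    have := congrArg (fun z => (w1 ⬝ᵥ (q.2.1 - q.1))⁻¹ • z) heq
    simp only [smul_smul] at this
    rw [inv_mul_cancel₀ hw1d1, one_smul] at this
    exact this.symm
  obtain ⟨ε1, hε1, hball1⟩ := Stmt11Aux.ball_pos C hCclosed hChom w' hw'D
  have hU2open : IsOpen (Metric.ball w' ε1 ∩ {w : Fin n → ℝ | w ⬝ᵥ p < w ⬝ᵥ v1}) :=
    Metric.isOpen_ball.inter (isOpen_lt (Stmt11Aux.cont_dotl p) (Stmt11Aux.cont_dotl v1))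
  have hw'U2 : w' ∈ Metric.ball w' ε1 ∩ {w : Fin n → ℝ | w ⬝ᵥ p < w ⬝ᵥ v1} := by
    refine ⟨Metric.mem_ball_self hε1, ?_⟩
    have h := hw'p
    rw [hdp, dotProduct_sub] at h
    simp only [Set.mem_setOf_eq]
    linarith
  obtain ⟨w2, hw2U, hw2gen⟩ := Stmt11Aux.avoid (S1 ∪ S2) _ hU2open ⟨w', hw'U2⟩ hS2ne
  have hw2D : ∀ c ∈ C, c ≠ 0 → 0 < w2 ⬝ᵥ c :=
    fun c hc h0 => hball1 w2 (Metric.mem_ball.1 hw2U.1) c hc h0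
  have hw2pv : w2 ⬝ᵥ p < w2 ⬝ᵥ v1 := hw2U.2
  obtain ⟨v2, hv2V, hv2min⟩ := Vf.exists_min_image (fun y => w2 ⬝ᵥ y) hVfNe
  have hv2lt : w2 ⬝ᵥ v2 < w2 ⬝ᵥ v1 := by
    have h := (hminP w2 hw2D (w2 ⬝ᵥ v2) (fun y hy => hv2min y hy) p hp).1
    linarith
  -- parametric family
  set wt : ℝ → (Fin n → ℝ) := fun t => (1 - t) • w1 + t • w2 with hwtdef
  have hwt : ∀ (t : ℝ) (d : Fin n → ℝ),
      wt t ⬝ᵥ d = (1 - t) * (w1 ⬝ᵥ d) + t * (w2 ⬝ᵥ d) := by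
    intro t d
    rw [hwtdef]
    simp [add_dotProduct, smul_dotProduct, smul_eq_mul]
  set T : Set ℝ := {t : ℝ | t ∈ Set.Icc (0:ℝ) 1 ∧ ∀ x ∈ Vf, wt t ⬝ᵥ v1 ≤ wt t ⬝ᵥ x}
    with hTdef
  have hT0 : (0:ℝ) ∈ T := by
    refine ⟨⟨le_refl 0, zero_le_one⟩, fun x hx => ?_⟩
    rw [hwt, hwt]
    simpa using hv1min x hx
  have hTbdd : BddAbove T := ⟨1, fun t ht => ht.1.2⟩
  have hTclosed : IsClosed T := by
    have hTeq : T = Set.Icc (0:ℝ) 1 ∩ ⋂ x ∈ Vf, {t : ℝ | wt t ⬝ᵥ v1 ≤ wt t ⬝ᵥ x} := by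
      ext t
      simp only [hTdef, Set.mem_setOf_eq, Set.mem_inter_iff, Set.mem_iInter]
    rw [hTeq]
    refine isClosed_Icc.inter (isClosed_biInter fun x _ => ?_)
    have hc1 : Continuous fun t : ℝ => wt t ⬝ᵥ v1 := by
      simp only [hwt]
      fun_prop
    have hc2 : Continuous fun t : ℝ => wt t ⬝ᵥ x := by
      simp only [hwt]
      fun_prop
    exact isClosed_le hc1 hc2
  set tst := sSup T with htstdef
  have htT : tst ∈ T := hTclosed.csSup_mem ⟨0, hT0⟩ hTbdd
  have h1T : (1:ℝ) ∉ T := by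
    intro h
    have h2 := h.2 v2 hv2V
    rw [hwt, hwt] at h2
    simp only [sub_self, zero_mul, one_mul, zero_add] at h2
    linarith
  have ht1 : tst < 1 := lt_of_le_of_ne htT.1.2 (fun h => h1T (h ▸ htT))
  have ht0 : 0 ≤ tst := htT.1.1
  -- a second tied vertex at tst
  have hx0ex : ∃ x0 ∈ Vf, x0 ≠ v1 ∧ wt tst ⬝ᵥ x0 = wt tst ⬝ᵥ v1 := by
    by_contra hcon
    push_neg at hcon
    have hgap : ∀ x ∈ Vf, x ≠ v1 → wt tst ⬝ᵥ v1 < wt tst ⬝ᵥ x := by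
      intro x hx hne
      exact lt_of_le_of_ne (htT.2 x hx) (fun h => hcon x hx hne h.symm)
    set dl : (Fin n → ℝ) → ℝ := fun x =>
      if x = v1 then 1 else (wt tst ⬝ᵥ x - wt tst ⬝ᵥ v1)
        / (|((w2 ⬝ᵥ x - w2 ⬝ᵥ v1) - (w1 ⬝ᵥ x - w1 ⬝ᵥ v1))| + 1) with hdl
    have hdlpos : ∀ x ∈ Vf, 0 < dl x := by
      intro x hx
      rw [hdl]
      by_cases h : x = v1
      · simp [h]
      · simp only [h, if_false]
        have hg := hgap x hx h
        exact div_pos (by linarith) (by positivity)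
    set η := min (Vf.inf' hVfNe dl) ((1 - tst)/2) with hη
    have hηpos : 0 < η := by
      rw [hη]
      refine lt_min ?_ (by linarith)
      rw [Finset.lt_inf'_iff]
      exact hdlpos
    have hmemT : tst + η ∈ T := by
      refine ⟨⟨by linarith, ?_⟩, ?_⟩
      · have h := min_le_right (Vf.inf' hVfNe dl) ((1 - tst)/2)
        rw [← hη] at h
        linarith
      · intro x hx
        by_cases h : x = v1
        · rw [h]
        · have hg := hgap x hx h
          have hηx : η ≤ dl x := le_trans (min_le_left _ _) (Finset.inf'_le dl hx)
          rw [hdl] at hηx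
          simp only [h, if_false] at hηx
          have hgx0 : 0 < wt tst ⬝ᵥ x - wt tst ⬝ᵥ v1 := by linarith
          have hphi : wt (tst+η) ⬝ᵥ x - wt (tst+η) ⬝ᵥ v1
              = (wt tst ⬝ᵥ x - wt tst ⬝ᵥ v1)
                + η * ((w2 ⬝ᵥ x - w2 ⬝ᵥ v1) - (w1 ⬝ᵥ x - w1 ⬝ᵥ v1)) := by
            rw [hwt, hwt, hwt, hwt]
            ring
          have h2 : -|((w2 ⬝ᵥ x - w2 ⬝ᵥ v1) - (w1 ⬝ᵥ x - w1 ⬝ᵥ v1))|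
              ≤ ((w2 ⬝ᵥ x - w2 ⬝ᵥ v1) - (w1 ⬝ᵥ x - w1 ⬝ᵥ v1)) := neg_abs_le _
          have hAnn : 0 ≤ |((w2 ⬝ᵥ x - w2 ⬝ᵥ v1) - (w1 ⬝ᵥ x - w1 ⬝ᵥ v1))| := abs_nonneg _
          have hkey : (wt tst ⬝ᵥ x - wt tst ⬝ᵥ v1)
                / (|((w2 ⬝ᵥ x - w2 ⬝ᵥ v1) - (w1 ⬝ᵥ x - w1 ⬝ᵥ v1))| + 1)
                * (|((w2 ⬝ᵥ x - w2 ⬝ᵥ v1) - (w1 ⬝ᵥ x - w1 ⬝ᵥ v1))| + 1)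
              = (wt tst ⬝ᵥ x - wt tst ⬝ᵥ v1) := div_mul_cancel₀ _ (by positivity)
          have hs1 : η * (-|((w2 ⬝ᵥ x - w2 ⬝ᵥ v1) - (w1 ⬝ᵥ x - w1 ⬝ᵥ v1))|)
              ≤ η * ((w2 ⬝ᵥ x - w2 ⬝ᵥ v1) - (w1 ⬝ᵥ x - w1 ⬝ᵥ v1)) :=
            mul_le_mul_of_nonneg_left h2 (le_of_lt hηpos)
          have hs2 : η * |((w2 ⬝ᵥ x - w2 ⬝ᵥ v1) - (w1 ⬝ᵥ x - w1 ⬝ᵥ v1))|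
              ≤ (wt tst ⬝ᵥ x - wt tst ⬝ᵥ v1)
                / (|((w2 ⬝ᵥ x - w2 ⬝ᵥ v1) - (w1 ⬝ᵥ x - w1 ⬝ᵥ v1))| + 1)
                * |((w2 ⬝ᵥ x - w2 ⬝ᵥ v1) - (w1 ⬝ᵥ x - w1 ⬝ᵥ v1))| :=
            mul_le_mul_of_nonneg_right hηx hAnn
          have hdivpos : 0 < (wt tst ⬝ᵥ x - wt tst ⬝ᵥ v1)
              / (|((w2 ⬝ᵥ x - w2 ⬝ᵥ v1) - (w1 ⬝ᵥ x - w1 ⬝ᵥ v1))| + 1) :=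
            div_pos hgx0 (by positivity)
          nlinarith [hphi, hs1, hs2, hkey, hdivpos]
    have hle := le_csSup hTbdd hmemT
    rw [← htstdef] at hle
    linarith
  obtain ⟨x0, hx0V, hx0ne, hx0eq⟩ := hx0ex
  have htpos : 0 < tst := by
    rcases lt_or_eq_of_le ht0 with h | h
    · exact h
    exfalso
    have h2 := hx0eq
    rw [← h, hwt, hwt] at h2
    simp only [sub_zero, one_mul, zero_mul, add_zero] at h2
    have hd : w1 ⬝ᵥ (x0 - v1) = 0 := by
      rw [dotProduct_sub]
      linarith
    exact hw1gen _ (hS1mem _ hx0V _ hv1V hx0ne) hd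
  set ws := wt tst with hws
  set m := ws ⬝ᵥ v1 with hm
  have hmmin : ∀ y ∈ Vf, m ≤ ws ⬝ᵥ y := htT.2
  set d := x0 - v1 with hd
  have hd0 : d ≠ 0 := sub_ne_zero.2 hx0ne
  have hwsD : ∀ c ∈ C, c ≠ 0 → 0 < ws ⬝ᵥ c := by
    intro c hc h0
    rw [hws, hwt]
    have h1 := hw1D c hc h0
    have h2 := hw2D c hc h0
    nlinarith
  have hcoll : ∀ y ∈ Vf, ws ⬝ᵥ y = m → ∃ r : ℝ, y = v1 + r • d := by
    intro y hyV hym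
    by_cases hy1 : y = v1
    · exact ⟨0, by simp [hy1]⟩
    by_contra hr
    push_neg at hr
    have hrne : ∀ r : ℝ, y - v1 ≠ r • d := by
      intro r h
      apply hr r
      rw [← h]
      abel
    have hq : (v1, x0, y) ∈ T3 := by
      rw [hT3]
      refine Finset.mem_filter.2 ⟨Finset.mem_product.2 ⟨hv1V,
        Finset.mem_product.2 ⟨hx0V, hyV⟩⟩, ?_, ?_⟩
      · exact fun r => hrne r
      · exact hx0ne
    have heS2 : (w1 ⬝ᵥ (y - v1)) • (x0 - v1) - (w1 ⬝ᵥ (x0 - v1)) • (y - v1) ∈ S2 :=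
      Finset.mem_image.2 ⟨(v1, x0, y), hq, rfl⟩
    have hw2e := hw2gen _ (Finset.mem_union_right _ heS2)
    have E1 : (1 - tst) * (w1 ⬝ᵥ d) + tst * (w2 ⬝ᵥ d) = 0 := by
      have hz : ws ⬝ᵥ d = 0 := by
        rw [hd, dotProduct_sub, hx0eq, hm, sub_self]
      rw [hws, hwt] at hz
      exact hz
    have E2 : (1 - tst) * (w1 ⬝ᵥ (y - v1)) + tst * (w2 ⬝ᵥ (y - v1)) = 0 := by
      have hz : ws ⬝ᵥ (y - v1) = 0 := by
        rw [dotProduct_sub, hym, hm, sub_self]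
      rw [hws, hwt] at hz
      exact hz
    apply hw2e
    have hexp : w2 ⬝ᵥ ((w1 ⬝ᵥ (y - v1)) • (x0 - v1) - (w1 ⬝ᵥ (x0 - v1)) • (y - v1))
        = (w1 ⬝ᵥ (y - v1)) * (w2 ⬝ᵥ d) - (w1 ⬝ᵥ d) * (w2 ⬝ᵥ (y - v1)) := by
      rw [dotProduct_sub, dotProduct_smul, dotProduct_smul,
        smul_eq_mul, smul_eq_mul, hd]
    rw [hexp]
    have hzero : tst * ((w1 ⬝ᵥ (y - v1)) * (w2 ⬝ᵥ d) - (w1 ⬝ᵥ d) * (w2 ⬝ᵥ (y - v1))) = 0 := by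
      linear_combination (w1 ⬝ᵥ (y - v1)) * E1 - (w1 ⬝ᵥ d) * E2
    rcases mul_eq_zero.1 hzero with h | h
    · exact absurd h (ne_of_gt htpos)
    · exact h
  have hmP := hminP ws hwsD m hmmin
  exfalso
  apply hno
  refine ⟨{q : Fin n → ℝ | q ∈ P ∧ ws ⬝ᵥ q = m}, ⟨v1, hv1P, rfl⟩,
    ⟨fun q hq => hq.1, ?_, ?_⟩, ?_, ?_⟩
  · -- convex
    intro x hx y hy a b ha hb hab
    refine ⟨hPconv hx.1 hy.1 ha hb hab, ?_⟩
    rw [dotProduct_add, dotProduct_smul, dotProduct_smul,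
      smul_eq_mul, smul_eq_mul, hx.2, hy.2, ← add_mul, hab, one_mul]
  · -- extreme
    intro x hxP y hyP t ht0' ht1' hmem
    have hxm := (hmP x hxP).1
    have hym := (hmP y hyP).1
    have hsum : t * (ws ⬝ᵥ x) + (1 - t) * (ws ⬝ᵥ y) = m := by
      have h := hmem.2
      rw [dotProduct_add, dotProduct_smul, dotProduct_smul,
        smul_eq_mul, smul_eq_mul] at h
      exact h
    have e1 : t * (ws ⬝ᵥ x - m) + (1 - t) * (ws ⬝ᵥ y - m) = 0 := by
      have he : t * (ws ⬝ᵥ x - m) + (1 - t) * (ws ⬝ᵥ y - m)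
          = t * (ws ⬝ᵥ x) + (1 - t) * (ws ⬝ᵥ y) - m := by ring
      rw [he, hsum, sub_self]
    have h1 : 0 ≤ t * (ws ⬝ᵥ x - m) := mul_nonneg (le_of_lt ht0') (by linarith)
    have h2 : 0 ≤ (1 - t) * (ws ⬝ᵥ y - m) := mul_nonneg (by linarith) (by linarith)
    have hxe : ws ⬝ᵥ x = m := by
      have hz : t * (ws ⬝ᵥ x - m) = 0 := by linarith
      rcases mul_eq_zero.1 hz with h | h
      · exact absurd h (ne_of_gt ht0')
      · linarith
    have hye : ws ⬝ᵥ y = m := by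
      have hz : (1 - t) * (ws ⬝ᵥ y - m) = 0 := by linarith
      rcases mul_eq_zero.1 hz with h | h
      · exact absurd h (ne_of_gt (by linarith : (0:ℝ) < 1 - t))
      · linarith
    exact ⟨⟨hxP, hxe⟩, ⟨hyP, hye⟩⟩
  · -- rank 1
    have hx0F : x0 ∈ {q : Fin n → ℝ | q ∈ P ∧ ws ⬝ᵥ q = m} := by
      refine ⟨hBP (hVfB x0 hx0V), ?_⟩
      rw [hm, hws]
      exact hx0eq
    have hv1F : v1 ∈ {q : Fin n → ℝ | q ∈ P ∧ ws ⬝ᵥ q = m} := ⟨hv1P, rfl⟩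
    have hFline : ∀ q ∈ {q : Fin n → ℝ | q ∈ P ∧ ws ⬝ᵥ q = m}, ∃ r : ℝ, q = v1 + r • d := by
      intro q hq
      have hqA := (hmP q hq.1).2 hq.2
      have hL : convexHull ℝ {y : Fin n → ℝ | y ∈ Vf ∧ ws ⬝ᵥ y = m}
          ⊆ {q : Fin n → ℝ | ∃ r : ℝ, q = v1 + r • d} := by
        apply convexHull_min
        · intro y hy
          exact hcoll y hy.1 hy.2
        · intro p1 h1 p2 h2 a b ha hb hab
          obtain ⟨r1, rfl⟩ := h1
          obtain ⟨r2, rfl⟩ := h2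
          refine ⟨a * r1 + b * r2, ?_⟩
          have hmod : a • (v1 + r1 • d) + b • (v1 + r2 • d)
              = (a + b) • v1 + (a*r1 + b*r2) • d := by module
          rw [hmod, hab, one_smul]
      exact hL hqA
    have hspan : vectorSpan ℝ {q : Fin n → ℝ | q ∈ P ∧ ws ⬝ᵥ q = m}
        = Submodule.span ℝ {d} := by
      apply le_antisymm
      · rw [vectorSpan_def]
        apply Submodule.span_le.2
        rintro z hz
        obtain ⟨q1, hq1, q2, hq2, rfl⟩ := hz
        obtain ⟨r1, rfl⟩ := hFline q1 hq1
        obtain ⟨r2, rfl⟩ := hFline q2 hq2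
        refine Submodule.mem_span_singleton.2 ⟨r1 - r2, ?_⟩
        show (r1 - r2) • d = (v1 + r1 • d) - (v1 + r2 • d)
        module
      · rw [Submodule.span_le, Set.singleton_subset_iff]
        have hmem := vsub_mem_vectorSpan ℝ hx0F hv1F
        rw [vsub_eq_sub] at hmem
        rw [hd]
        exact hmem
    rw [hspan]
    exact finrank_span_singleton hd0
  · -- bounded
    have hFB : {q : Fin n → ℝ | q ∈ P ∧ ws ⬝ᵥ q = m} ⊆ B := by
      intro q hq
      obtain ⟨b, hb, c, hc, rfl⟩ := hPelem q hq.1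
      have hbge : m ≤ ws ⬝ᵥ b := (hmP b (hBP hb)).1
      have hcge : 0 ≤ ws ⬝ᵥ c := hDnn ws hwsD c hc
      have hsp : ws ⬝ᵥ (b + c) = ws ⬝ᵥ b + ws ⬝ᵥ c := dotProduct_add ws b c
      have hqm := hq.2
      rw [hsp] at hqm
      have hc0' : ws ⬝ᵥ c = 0 := by linarith
      have hcz : c = 0 := by
        by_contra hcn
        exact absurd hc0' (ne_of_gt (hwsD c hc hcn))
      rw [hcz, add_zero]
      exact hb
    have hBbdd : Bornology.IsBounded B := by
      rw [hBeq]
      exact isBounded_convexHull.2 hVfin.isBounded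
    exact hBbdd.subset hFB
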